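/- Let ℓ ≥ 3 be a prime, k an algebraically closed field of characteristic ℓ, G a finite group, ρ : G → GL₂(k) a group homomorphism, and H a normal subgroup of G whose index [G:H] is a power of ℓ. Then the representation of G on k² given by ρ is irreducible if and only if its restriction to H is irreducible. -/

import Mathlib

section Helpers
variable {k : Type} [Field k]

lemma CH2 (A : Matrix (Fin 2) (Fin 2) k) :
    A * A = A.trace • A - A.det • (1 : Matrix (Fin 2) (Fin 2) k) := by
  ext i j
  fin_cases i <;> fin_cases j <;>
    simp [Matrix.mul_apply, Fin.sum_univ_two, Matrix.trace_fin_two, Matrix.det_fin_two,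
      Matrix.one_apply, smul_eq_mul] <;> ring

lemma det_one_add (N : Matrix (Fin 2) (Fin 2) k) :
    (1 + N).det = 1 + N.trace + N.det := by
  simp [Matrix.det_fin_two, Matrix.trace_fin_two, Matrix.one_apply, Matrix.add_apply]
  ring

lemma det_smul_one_sub (e : k) (B : Matrix (Fin 2) (Fin 2) k) :
    (e • 1 - B).det = e ^ 2 - e * B.trace + B.det := by
  simp [Matrix.det_fin_two, Matrix.trace_fin_two, Matrix.one_apply, Matrix.sub_apply,
    smul_eq_mul]
  ring

lemma nilp2 {n : ℕ} (hn : n ≠ 0) (N : Matrix (Fin 2) (Fin 2) k) (h : N ^ n = 0) :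
    N.trace = 0 ∧ N.det = 0 ∧ N * N = 0 := by
  have hdet : N.det = 0 := by
    have h1 : N.det ^ n = 0 := by rw [← Matrix.det_pow, h]; simp
    exact pow_eq_zero_iff hn |>.mp h1
  by_cases hN : N = 0
  · subst hN; simp
  · have hch : N * N = N.trace • N := by rw [CH2, hdet]; simp
    have key : ∀ j : ℕ, N ^ (j + 1) = N.trace ^ j • N := by
      intro j; induction j with
      | zero => simp
      | succ j ih =>
        rw [pow_succ, ih, smul_mul_assoc, hch, smul_smul, ← pow_succ]
    obtain ⟨n', rfl⟩ : ∃ n', n = n' + 1 := ⟨n - 1, (Nat.succ_pred_eq_of_ne_zero hn).symm⟩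
    have h0 : N.trace ^ n' • N = 0 := by rw [← key n', h]
    rcases n' with _ | n''
    · exact absurd (by simpa using h) hN
    · have ht : N.trace = 0 := by
        rcases smul_eq_zero.mp h0 with h' | h'
        · exact pow_eq_zero_iff (Nat.succ_ne_zero _) |>.mp h'
        · exact absurd h' hN
      exact ⟨ht, hdet, by rw [hch, ht, zero_smul]⟩

lemma step2 {ℓ : ℕ} [Fact ℓ.Prime] [CharP k ℓ] [IsAlgClosed k] {m : ℕ}
    (X : Matrix (Fin 2) (Fin 2) k) (c : k) (hc : c ≠ 0) (h : X ^ (ℓ ^ m) = c • 1) :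
    ∃ a : k, a ≠ 0 ∧ X.trace = 2 * a ∧ X.det = a ^ 2 ∧
      (X - a • 1) * (X - a • 1) = 0 := by
  have hℓ : ℓ.Prime := Fact.out
  have hpos : 0 < ℓ ^ m := pow_pos hℓ.pos m
  obtain ⟨d, hd⟩ := IsAlgClosed.exists_pow_nat_eq c hpos
  have hd0 : d ≠ 0 := by
    rintro rfl; exact hc (by rw [← hd, zero_pow hpos.ne'])
  set U := d⁻¹ • X with hUdef
  have hXU : X = d • U := by rw [hUdef, smul_smul, mul_inv_cancel₀ hd0, one_smul]
  have hU : U ^ (ℓ ^ m) = 1 := by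
    rw [hUdef, smul_pow, h, smul_smul, inv_pow, hd, inv_mul_cancel₀ hc, one_smul]
  have hNpow : (U - 1) ^ (ℓ ^ m) = 0 := by
    have h2 := sub_pow_char_pow_of_commute (p := ℓ) (n := m) (Commute.one_right U)
    rw [hU, one_pow, sub_self] at h2
    exact h2
  obtain ⟨ht, hdt, hsq⟩ := nilp2 hpos.ne' (U - 1) hNpow
  have hU1 : U = 1 + (U - 1) := by abel
  have htU : U.trace = 2 := by
    rw [hU1, Matrix.trace_add, Matrix.trace_one, ht]; simp
  have hdU : U.det = 1 := by
    rw [hU1, det_one_add, ht, hdt]; ring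
  refine ⟨d, hd0, ?_, ?_, ?_⟩
  · rw [hXU, Matrix.trace_smul, htU, smul_eq_mul]; ring
  · rw [hXU, Matrix.det_smul, hdU, Fintype.card_fin]; ring
  · have hXd : X - d • 1 = d • (U - 1) := by rw [hXU, smul_sub]
    rw [hXd, smul_mul_assoc, mul_smul_comm, hsq, smul_zero, smul_zero]

lemma pairTrace {A B Bi : Matrix (Fin 2) (Fin 2) k} {a b c c' : k}
    (h2 : (2 : k) ≠ 0) (ha : a ≠ 0) (hb : b ≠ 0)
    (htA : A.trace = 2 * a) (hdA : A.det = a ^ 2)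
    (htB : B.trace = 2 * b) (hdB : B.det = b ^ 2)
    (hBB : (B - b • 1) * (B - b • 1) = 0)
    (hBi : Bi * B = 1)
    (ht1 : (A * B).trace = 2 * c) (hd1 : (A * B).det = c ^ 2)
    (ht2 : (A * Bi).trace = 2 * c') (hd2 : (A * Bi).det = c' ^ 2) :
    (A * B).trace = 2 * (a * b) := by
  have hBsq : B * B = (2 * b) • B - (b ^ 2) • 1 := by
    have hc2 := CH2 B; rw [htB, hdB] at hc2; exact hc2
  have hZ : B * ((b ^ 2)⁻¹ • ((2 * b) • 1 - B)) = 1 := by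
    rw [mul_smul_comm, mul_sub, mul_smul_comm, mul_one, hBsq, sub_sub_cancel,
      smul_smul, inv_mul_cancel₀ (pow_ne_zero 2 hb), one_smul]
  have hBiZ : Bi = (b ^ 2)⁻¹ • ((2 * b) • 1 - B) := by
    calc Bi = Bi * (B * ((b ^ 2)⁻¹ • ((2 * b) • 1 - B))) := by rw [hZ, mul_one]
    _ = (Bi * B) * ((b ^ 2)⁻¹ • ((2 * b) • 1 - B)) := by rw [mul_assoc]
    _ = _ := by rw [hBi, one_mul]
  have htABi : (A * Bi).trace = (b ^ 2)⁻¹ * (4 * (a * b) - (A * B).trace) := by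
    rw [hBiZ, mul_smul_comm, Matrix.trace_smul, mul_sub, mul_smul_comm, mul_one,
      Matrix.trace_sub, Matrix.trace_smul, htA, smul_eq_mul, smul_eq_mul]
    ring
  have hdBi : Bi.det = (b ^ 2)⁻¹ := by
    have hdet1 : ((2 * b) • (1 : Matrix (Fin 2) (Fin 2) k) - B).det = b ^ 2 := by
      have hds := det_smul_one_sub (2 * b) B
      rw [htB, hdB] at hds; rw [hds]; ring
    rw [hBiZ, Matrix.det_smul, hdet1, Fintype.card_fin]
    field_simp
  have hdABi : (A * Bi).det = a ^ 2 * (b ^ 2)⁻¹ := by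
    rw [Matrix.det_mul, hdA, hdBi]
  have f1 : c ^ 2 = a ^ 2 * b ^ 2 := by rw [← hd1, Matrix.det_mul, hdA, hdB]
  have f2 : c' ^ 2 = a ^ 2 * (b ^ 2)⁻¹ := by rw [← hd2, hdABi]
  have f3 : 2 * c' = (b ^ 2)⁻¹ * (4 * (a * b) - 2 * c) := by
    rw [← ht1, ← ht2, htABi]
  have g3 : (2 * c') * b ^ 2 = 4 * (a * b) - 2 * c := by
    rw [f3]; field_simp
  have g2 : c' ^ 2 * (b ^ 2) ^ 2 = a ^ 2 * b ^ 2 := by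
    rw [f2]; field_simp
  have g4 : (4 * (a * b) - 2 * c) ^ 2 = 4 * (a ^ 2 * b ^ 2) := by
    rw [← g3]; linear_combination 4 * g2
  have g5 : (a * b - c) * (16 * (a * b)) = 0 := by linear_combination g4 - 4 * f1
  have h16 : (16 : k) * (a * b) ≠ 0 := by
    have h16' : (16 : k) = 2 * 2 * 2 * 2 := by norm_num
    rw [h16']
    exact mul_ne_zero (mul_ne_zero (mul_ne_zero (mul_ne_zero h2 h2) h2) h2) (mul_ne_zero ha hb)
  have hcab : a * b - c = 0 := (mul_eq_zero.mp g5).resolve_right h16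
  rw [ht1]
  have hce : c = a * b := by linear_combination -hcab
  rw [hce]

lemma anticomm (h2 : (2 : k) ≠ 0) {N M : Matrix (Fin 2) (Fin 2) k}
    (hN : N * N = 0) (hM : M * M = 0) (hT : (N * M).trace = 0) :
    N * M = -(M * N) := by
  have hNt : N.trace = 0 := (nilp2 two_ne_zero N (by rw [pow_two]; exact hN)).1
  have hMt : M.trace = 0 := (nilp2 two_ne_zero M (by rw [pow_two]; exact hM)).1
  have hS := CH2 (N + M)
  have expand : (N + M) * (N + M) = N * M + M * N := by
    rw [add_mul, mul_add, mul_add, hN, hM]; abel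
  have htr : (N + M).trace = 0 := by rw [Matrix.trace_add, hNt, hMt, add_zero]
  rw [expand, htr, zero_smul, zero_sub] at hS
  have htrS : ((N * M + M * N).trace) = -((N + M).det * 2) := by
    rw [hS, Matrix.trace_neg, Matrix.trace_smul, Matrix.trace_one, smul_eq_mul,
      Fintype.card_fin]
    push_cast
    ring
  rw [Matrix.trace_add, Matrix.trace_mul_comm M N, hT, add_zero] at htrS
  have hdet0 : (N + M).det = 0 := by
    have h0 : (N + M).det * 2 = 0 := neg_eq_zero.mp htrS.symm
    exact (mul_eq_zero.mp h0).resolve_right h2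
  rw [hdet0, zero_smul, neg_zero] at hS
  rw [eq_neg_iff_add_eq_zero]
  exact hS

lemma zero_of_two_ker {D : Matrix (Fin 2) (Fin 2) k} {v w : Fin 2 → k}
    (hd : v 0 * w 1 - v 1 * w 0 ≠ 0)
    (h1 : D.mulVec v = 0) (h2 : D.mulVec w = 0) : D = 0 := by
  set C : Matrix (Fin 2) (Fin 2) k := Matrix.of ![![v 0, w 0], ![v 1, w 1]] with hC
  have hdetC : C.det = v 0 * w 1 - v 1 * w 0 := by
    simp [hC, Matrix.det_fin_two]
    ring
  have hDC : D * C = 0 := by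
    ext i j
    fin_cases j
    · have := congrFun h1 i
      simp [Matrix.mulVec, dotProduct, Fin.sum_univ_two] at this
      simp [hC, Matrix.mul_apply, Fin.sum_univ_two]
      convert this using 2
    · have := congrFun h2 i
      simp [Matrix.mulVec, dotProduct, Fin.sum_univ_two] at this
      simp [hC, Matrix.mul_apply, Fin.sum_univ_two]
      convert this using 2
  have hinv : C * C⁻¹ = 1 := Matrix.mul_nonsing_inv C (by rw [hdetC]; exact hd.isUnit)
  calc D = D * (C * C⁻¹) := by rw [hinv, mul_one]
  _ = (D * C) * C⁻¹ := by rw [mul_assoc]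
  _ = 0 := by rw [hDC, zero_mul]

lemma dep2 {v w : Fin 2 → k} (hv : v ≠ 0) (h : v 0 * w 1 - v 1 * w 0 = 0) :
    ∃ e : k, w = e • v := by
  by_cases h0 : v 0 ≠ 0
  · refine ⟨w 0 / v 0, ?_⟩
    funext i
    fin_cases i
    · simp [Pi.smul_apply, smul_eq_mul]; field_simp
    · simp [Pi.smul_apply, smul_eq_mul]; field_simp; linear_combination h
  · push_neg at h0
    have h1 : v 1 ≠ 0 := by
      intro h1
      apply hv
      funext i; fin_cases i <;> simp [h0, h1]
    refine ⟨w 1 / v 1, ?_⟩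
    funext i
    fin_cases i
    · have hw0 : w 0 = 0 := by
        have : v 1 * w 0 = 0 := by rw [h0] at h; linear_combination -h
        exact (mul_eq_zero.mp this).resolve_left h1
      simp [Pi.smul_apply, smul_eq_mul, hw0, h0]
    · simp [Pi.smul_apply, smul_eq_mul]; field_simp

lemma indep2 {v1 v2 : Fin 2 → k} (hd : v1 0 * v2 1 - v1 1 * v2 0 ≠ 0) {s t : k}
    (h : s • v1 + t • v2 = 0) : s = 0 ∧ t = 0 := by
  have h0 := congrFun h 0
  have h1 := congrFun h 1
  simp [Pi.smul_apply, smul_eq_mul] at h0 h1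
  constructor
  · have hs : s * (v1 0 * v2 1 - v1 1 * v2 0) = 0 := by
      linear_combination v2 1 * h0 - v2 0 * h1
    exact (mul_eq_zero.mp hs).resolve_right hd
  · have ht : t * (v1 0 * v2 1 - v1 1 * v2 0) = 0 := by
      linear_combination v1 0 * h1 - v1 1 * h0
    exact (mul_eq_zero.mp ht).resolve_right hd

lemma eig3 {A : Matrix (Fin 2) (Fin 2) k} {v1 v2 v3 : Fin 2 → k} {c1 c2 c3 : k}
    (hv2 : v2 ≠ 0)
    (e1 : A.mulVec v1 = c1 • v1) (e2 : A.mulVec v2 = c2 • v2) (e3 : A.mulVec v3 = c3 • v3)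
    (n12 : ∀ e : k, v1 ≠ e • v2) (n31 : ∀ e : k, v3 ≠ e • v1) (n32 : ∀ e : k, v3 ≠ e • v2) :
    ∃ e : k, A = e • 1 := by
  have hd : v1 0 * v2 1 - v1 1 * v2 0 ≠ 0 := by
    intro h
    have h' : v2 0 * v1 1 - v2 1 * v1 0 = 0 := by
      have hr : v2 0 * v1 1 - v2 1 * v1 0 = -(v1 0 * v2 1 - v1 1 * v2 0) := by ring
      rw [hr, h, neg_zero]
    obtain ⟨e, he⟩ := dep2 hv2 h'
    exact n12 e he
  set α := (v3 0 * v2 1 - v3 1 * v2 0) / (v1 0 * v2 1 - v1 1 * v2 0) with hα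
  set β := (v1 0 * v3 1 - v1 1 * v3 0) / (v1 0 * v2 1 - v1 1 * v2 0) with hβ
  have hrep : v3 = α • v1 + β • v2 := by
    funext i
    fin_cases i <;>
      · simp only [Pi.add_apply, Pi.smul_apply, smul_eq_mul, hα, hβ, Fin.zero_eta, Fin.mk_one]
        rw [div_mul_eq_mul_div, div_mul_eq_mul_div, ← add_div, eq_div_iff hd]
        ring
  have hα0 : α ≠ 0 := by
    rintro h; exact n32 β (by rw [hrep, h, zero_smul, zero_add])
  have hβ0 : β ≠ 0 := by
    rintro h; exact n31 α (by rw [hrep, h, zero_smul, add_zero])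
  have hAv3 : (α * c1) • v1 + (β * c2) • v2 = c3 • v3 := by
    rw [← e3, hrep, Matrix.mulVec_add, Matrix.mulVec_smul, Matrix.mulVec_smul, e1, e2,
      smul_smul, smul_smul]
  have hkey : (α * (c1 - c3)) • v1 + (β * (c2 - c3)) • v2 = 0 := by
    have hc3 : c3 • v3 = (c3 * α) • v1 + (c3 * β) • v2 := by
      rw [hrep, smul_add, smul_smul, smul_smul]
    rw [hc3] at hAv3
    have hz := sub_eq_zero.mpr hAv3
    rw [← hz]
    module
  obtain ⟨hc1, hc2⟩ := indep2 hd hkey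
  have hc13 : c1 = c3 := by
    have h' := (mul_eq_zero.mp hc1).resolve_left hα0; linear_combination h'
  have hc23 : c2 = c3 := by
    have h' := (mul_eq_zero.mp hc2).resolve_left hβ0; linear_combination h'
  refine ⟨c3, ?_⟩
  have hD1 : (A - c3 • 1).mulVec v1 = 0 := by
    rw [Matrix.sub_mulVec, e1, Matrix.smul_mulVec, Matrix.one_mulVec, hc13, sub_self]
  have hD2 : (A - c3 • 1).mulVec v2 = 0 := by
    rw [Matrix.sub_mulVec, e2, Matrix.smul_mulVec, Matrix.one_mulVec, hc23, sub_self]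
  have hz := zero_of_two_ker hd hD1 hD2
  rw [sub_eq_zero] at hz
  exact hz

lemma line_exists {W : Submodule k (Fin 2 → k)} (hb : W ≠ ⊥) (ht : W ≠ ⊤) :
    ∃ v : Fin 2 → k, v ≠ 0 ∧ W = Submodule.span k {v} := by
  obtain ⟨v, hvW, hv0⟩ := Submodule.exists_mem_ne_zero_of_ne_bot hb
  refine ⟨v, hv0, ?_⟩
  have hle : Submodule.span k {v} ≤ W := Submodule.span_le.mpr (by simpa using hvW)
  have hlt : Module.finrank k W < 2 := by
    have h' := Submodule.finrank_lt (K := k) ht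
    rwa [Module.finrank_fin_fun] at h'
  have hsp : Module.finrank k (Submodule.span k {v}) = 1 := finrank_span_singleton hv0
  exact (Submodule.eq_of_le_of_finrank_le hle (by rw [hsp]; omega)).symm

lemma three_distinct {α : Type} [Finite α] (h : 2 < Nat.card α) :
    ∃ x y z : α, x ≠ y ∧ x ≠ z ∧ y ≠ z := by
  haveI := Fintype.ofFinite α
  classical
  rw [Nat.card_eq_fintype_card] at h
  by_contra hc
  push_neg at hc
  obtain ⟨x, y, hxy⟩ := Fintype.exists_pair_of_one_lt_card (α := α) (by omega)
  have hsub : (Finset.univ : Finset α) ⊆ {x, y} := by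
    intro z _
    rcases eq_or_ne z x with h1 | h1
    · simp [h1]
    · rcases eq_or_ne z y with h2 | h2
      · simp [h2]
      · exact absurd (hc x y z hxy (Ne.symm h1)) (Ne.symm h2)
  have hcard := Finset.card_le_card hsub
  have h2 : ({x, y} : Finset α).card ≤ 2 := (Finset.card_insert_le _ _).trans (by simp)
  rw [Finset.card_univ] at hcard
  omega

end Helpers

/-- A 2-dimensional representation `ρ : G → GL₂(k)` is irreducible if no nonzero proper
subspace of `k²` is stable under all `ρ(g)`. -/
def MatIrred {k : Type} [Field k] {G : Type} [Group G]
    (ρ : G →* Matrix.GeneralLinearGroup (Fin 2) k) : Prop :=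
  ∀ W : Submodule k (Fin 2 → k),
    (∀ g : G, ∀ x ∈ W, (ρ g : Matrix (Fin 2) (Fin 2) k).mulVec x ∈ W) → W = ⊥ ∨ W = ⊤

/-- Let `ℓ ≥ 3` be a prime, `k` an algebraically closed field of
characteristic `ℓ`, `G` a finite group, `ρ : G → GL₂(k)` and `H` a normal subgroup of `G`
of `ℓ`-power index.  Then `ρ` is irreducible iff its restriction to `H` is. -/
theorem irreducible_iff_restriction_irreducible_of_prime_power_index
    (ℓ : ℕ) (hℓ : ℓ.Prime) (hℓ3 : 3 ≤ ℓ)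
    (k : Type) [Field k] [IsAlgClosed k] [CharP k ℓ]
    (G : Type) [Group G] [Finite G]
    (ρ : G →* Matrix.GeneralLinearGroup (Fin 2) k)
    (H : Subgroup G) (hH : H.Normal) (m : ℕ) (hidx : H.index = ℓ ^ m) :
    MatIrred ρ ↔
      ∀ W : Submodule k (Fin 2 → k),
        (∀ g ∈ H, ∀ x ∈ W, (ρ g : Matrix (Fin 2) (Fin 2) k).mulVec x ∈ W) →
        W = ⊥ ∨ W = ⊤ := by
  haveI := hH
  haveI : Fact ℓ.Prime := ⟨hℓ⟩
  have h2 : (2 : k) ≠ 0 := by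
    have hnd : ¬ (ℓ ∣ 2) := fun hdvd => by
      have := Nat.le_of_dvd (by norm_num) hdvd; omega
    intro h20
    exact hnd ((CharP.cast_eq_zero_iff k ℓ 2).mp (by exact_mod_cast h20))
  constructor
  · intro hirr W hW
    by_cases hWb : W = ⊥
    · left; exact hWb
    by_cases hWt : W = ⊤
    · right; exact hWt
    exfalso
    by_cases hsc : ∀ h ∈ H, ∃ e : k, ((ρ h : Matrix (Fin 2) (Fin 2) k)) = e • 1
    · -- Case A : H acts by scalars
      by_cases hallG : ∀ g : G, ∃ e : k, ((ρ g : Matrix (Fin 2) (Fin 2) k)) = e • 1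
      · have hst : ∀ g : G, ∀ x ∈ W, ((ρ g : Matrix (Fin 2) (Fin 2) k)).mulVec x ∈ W := by
          intro g x hx
          obtain ⟨e, he⟩ := hallG g
          rw [he, Matrix.smul_mulVec, Matrix.one_mulVec]
          exact W.smul_mem e hx
        rcases hirr W hst with h | h
        exacts [hWb h, hWt h]
      · push_neg at hallG
        obtain ⟨g₀, hg₀⟩ := hallG
        have hindex : ∀ g : G, g ^ (ℓ ^ m) ∈ H := fun g => by
          have := H.pow_index_mem g; rwa [hidx] at this
        have step1 : ∀ g : G, ∃ c : k, c ≠ 0 ∧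
            ((ρ g : Matrix (Fin 2) (Fin 2) k)) ^ (ℓ ^ m) = c • 1 := by
          intro g
          obtain ⟨e, he⟩ := hsc _ (hindex g)
          have hp : ((ρ g : Matrix (Fin 2) (Fin 2) k)) ^ (ℓ ^ m) = e • 1 := by
            rw [← Units.val_pow_eq_pow_val, ← map_pow]
            exact he
          refine ⟨e, ?_, hp⟩
          intro h0
          rw [h0, zero_smul] at hp
          have hdet : ((ρ g : Matrix (Fin 2) (Fin 2) k)).det ^ (ℓ ^ m) = 0 := by
            rw [← Matrix.det_pow, hp]
            simp
          have hd0 : ((ρ g : Matrix (Fin 2) (Fin 2) k)).det = 0 :=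
            pow_eq_zero_iff (pow_ne_zero m hℓ.pos.ne') |>.mp hdet
          have hu : IsUnit ((ρ g : Matrix (Fin 2) (Fin 2) k)).det :=
            (Matrix.isUnit_iff_isUnit_det _).mp (ρ g).isUnit
          rw [hd0] at hu
          exact hu.ne_zero rfl
        have step2g : ∀ g : G, ∃ a : k, a ≠ 0 ∧
            ((ρ g : Matrix (Fin 2) (Fin 2) k)).trace = 2 * a ∧
            ((ρ g : Matrix (Fin 2) (Fin 2) k)).det = a ^ 2 ∧
            ((ρ g : Matrix (Fin 2) (Fin 2) k) - a • 1) *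
              ((ρ g : Matrix (Fin 2) (Fin 2) k) - a • 1) = 0 := by
          intro g
          obtain ⟨c, hc0, hcp⟩ := step1 g
          exact step2 _ c hc0 hcp
        obtain ⟨a, ha0, htA, hdA, hAA⟩ := step2g g₀
        set A := ((ρ g₀ : Matrix (Fin 2) (Fin 2) k)) with hAdef
        set N := A - a • 1 with hNdef
        have hN0 : N ≠ 0 := by
          intro h; apply hg₀ a; rw [← sub_eq_zero]; exact h
        have hNN : N * N = 0 := hAA
        have hdetN : N.det = 0 := (nilp2 two_ne_zero N (by rw [pow_two]; exact hNN)).2.1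
        obtain ⟨v, hv0, hvk⟩ := Matrix.exists_mulVec_eq_zero_iff.mpr hdetN
        set L := LinearMap.ker N.mulVecLin with hLdef
        have hvL : v ∈ L := by
          rw [hLdef, LinearMap.mem_ker, Matrix.mulVecLin_apply]; exact hvk
        have hLb : L ≠ ⊥ := by
          intro h; rw [h] at hvL; exact hv0 ((Submodule.mem_bot k).mp hvL)
        have hLt : L ≠ ⊤ := by
          intro h
          apply hN0
          ext i j
          have hm : Pi.single j 1 ∈ L := by rw [h]; trivial
          rw [hLdef, LinearMap.mem_ker, Matrix.mulVecLin_apply] at hm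
          have hmm := congrFun hm i
          rw [Matrix.mulVec_single] at hmm
          simpa using hmm
        have hstab : ∀ g : G, ∀ x ∈ L, ((ρ g : Matrix (Fin 2) (Fin 2) k)).mulVec x ∈ L := by
          intro g x hx
          by_cases hg : ∃ e : k, ((ρ g : Matrix (Fin 2) (Fin 2) k)) = e • 1
          · obtain ⟨e, he⟩ := hg
            rw [he, Matrix.smul_mulVec, Matrix.one_mulVec]
            exact L.smul_mem e hx
          · push_neg at hg
            obtain ⟨b, hb0, htB, hdB, hBB⟩ := step2g g
            set B := ((ρ g : Matrix (Fin 2) (Fin 2) k)) with hBdef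
            set M := B - b • 1 with hMdef
            have hMM : M * M = 0 := hBB
            obtain ⟨c, hc0, htc, hdc, hcc⟩ := step2g (g₀ * g)
            obtain ⟨c', hc'0, htc', hdc', hcc'⟩ := step2g (g₀ * g⁻¹)
            have hABc : ((ρ (g₀ * g) : Matrix (Fin 2) (Fin 2) k)) = A * B := by
              rw [map_mul]; rfl
            have hABc' : ((ρ (g₀ * g⁻¹) : Matrix (Fin 2) (Fin 2) k)) =
                A * ((ρ g⁻¹ : Matrix (Fin 2) (Fin 2) k)) := by
              rw [map_mul]; rfl
            have hBi : ((ρ g⁻¹ : Matrix (Fin 2) (Fin 2) k)) * B = 1 := by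
              have h1 : ρ g⁻¹ * ρ g = 1 := by rw [← map_mul, inv_mul_cancel, map_one]
              calc ((ρ g⁻¹ : Matrix (Fin 2) (Fin 2) k)) * B
                  = ((ρ g⁻¹ * ρ g : Matrix.GeneralLinearGroup (Fin 2) k) :
                      Matrix (Fin 2) (Fin 2) k) := rfl
              _ = 1 := by rw [h1]; rfl
            rw [hABc] at htc hdc
            rw [hABc'] at htc' hdc'
            have hT := pairTrace h2 ha0 hb0 htA hdA htB hdB hBB hBi htc hdc htc' hdc'
            have hA1 : A * (b • 1) = b • A := by rw [mul_smul_comm, mul_one]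
            have h1B : (a • (1 : Matrix (Fin 2) (Fin 2) k)) * B = a • B := by
              rw [smul_mul_assoc, one_mul]
            have h11 : (a • (1 : Matrix (Fin 2) (Fin 2) k)) * (b • 1) =
                (a * b) • (1 : Matrix (Fin 2) (Fin 2) k) := by
              rw [smul_mul_assoc, one_mul, smul_smul]
            have hexp : N * M = (A * B - b • A) - (a • B - (a * b) • 1) := by
              rw [hNdef, hMdef, sub_mul, mul_sub, mul_sub, hA1, h1B, h11]
            have hNM : (N * M).trace = 0 := by
              rw [hexp, Matrix.trace_sub, Matrix.trace_sub, Matrix.trace_sub,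
                Matrix.trace_smul, Matrix.trace_smul, Matrix.trace_smul, Matrix.trace_one,
                htA, htB, hT, Fintype.card_fin, smul_eq_mul, smul_eq_mul, smul_eq_mul]
              push_cast
              ring
            have hanti := anticomm h2 hNN hMM hNM
            by_cases hx0 : x = 0
            · rw [hx0, Matrix.mulVec_zero]; exact L.zero_mem
            · have hxk : N.mulVec x = 0 := by
                rw [hLdef, LinearMap.mem_ker, Matrix.mulVecLin_apply] at hx; exact hx
              have hMxk : N.mulVec (M.mulVec x) = 0 := by
                rw [Matrix.mulVec_mulVec, hanti, Matrix.neg_mulVec, ← Matrix.mulVec_mulVec,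
                  hxk, Matrix.mulVec_zero, neg_zero]
              have hdep : x 0 * (M.mulVec x) 1 - x 1 * (M.mulVec x) 0 = 0 := by
                by_contra hne
                exact hN0 (zero_of_two_ker hne hxk hMxk)
              obtain ⟨e, he⟩ := dep2 hx0 hdep
              have he0 : e = 0 := by
                have h1 : (M * M).mulVec x = (e * e) • x := by
                  rw [← Matrix.mulVec_mulVec, he, Matrix.mulVec_smul, he, smul_smul]
                rw [hMM, Matrix.zero_mulVec] at h1
                have h2' := (smul_eq_zero.mp h1.symm).resolve_right hx0
                exact mul_self_eq_zero.mp h2'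
              have hMx0 : M.mulVec x = 0 := by rw [he, he0, zero_smul]
              have hBx : B.mulVec x = b • x := by
                have hBM : B = M + b • 1 := by rw [hMdef]; abel
                rw [hBM, Matrix.add_mulVec, hMx0, zero_add, Matrix.smul_mulVec,
                  Matrix.one_mulVec]
              rw [hLdef, LinearMap.mem_ker, Matrix.mulVecLin_apply, hBx,
                Matrix.mulVec_smul, hxk, smul_zero]
        rcases hirr L hstab with h | h
        exacts [hLb h, hLt h]
    · -- Case B : some element of H is non-scalar
      push_neg at hsc
      obtain ⟨h₀, hh₀H, hh₀⟩ := hsc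
      classical
      set φ : G → Submodule k (Fin 2 → k) :=
        fun g => Submodule.map ((ρ g : Matrix (Fin 2) (Fin 2) k)).mulVecLin W with hφ
      have hφmul : ∀ g g' : G,
          φ (g * g') = Submodule.map ((ρ g : Matrix (Fin 2) (Fin 2) k)).mulVecLin (φ g') := by
        intro g g'
        simp only [hφ]
        rw [show ((ρ (g * g') : Matrix (Fin 2) (Fin 2) k)) =
            (ρ g : Matrix (Fin 2) (Fin 2) k) * (ρ g' : Matrix (Fin 2) (Fin 2) k) from by
          rw [map_mul]; rfl]
        rw [Matrix.mulVecLin_mul, Submodule.map_comp]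
      have hφone : φ 1 = W := by
        simp only [hφ]
        rw [show ((ρ (1 : G) : Matrix (Fin 2) (Fin 2) k)) = 1 from by rw [map_one]; rfl]
        rw [Matrix.mulVecLin_one, Submodule.map_id]
      have hφinv : ∀ g : G,
          Submodule.map ((ρ g⁻¹ : Matrix (Fin 2) (Fin 2) k)).mulVecLin (φ g) = W := by
        intro g
        have h1 := hφmul g⁻¹ g
        rw [inv_mul_cancel, hφone] at h1
        exact h1.symm
      have hφle : ∀ h ∈ H, φ h ≤ W := by
        intro h hh
        simp only [hφ]
        refine Submodule.map_le_iff_le_comap.mpr ?_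
        intro x hx
        simp only [Submodule.mem_comap, Matrix.mulVecLin_apply]
        exact hW h hh x hx
      have hφH : ∀ h ∈ H, φ h = W := by
        intro h hh
        refine le_antisymm (hφle h hh) ?_
        have h1 := hφmul h h⁻¹
        rw [mul_inv_cancel, hφone] at h1
        calc W = Submodule.map ((ρ h : Matrix (Fin 2) (Fin 2) k)).mulVecLin (φ h⁻¹) := h1
        _ ≤ Submodule.map ((ρ h : Matrix (Fin 2) (Fin 2) k)).mulVecLin W :=
            Submodule.map_mono (hφle h⁻¹ (H.inv_mem hh))
        _ = φ h := rfl
      set St : Subgroup G :=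
        { carrier := {g : G | φ g = W}
          one_mem' := hφone
          mul_mem' := by
            intro x y hx hy
            show φ (x * y) = W
            rw [hφmul, hy]
            exact hx
          inv_mem' := by
            intro x hx
            show φ x⁻¹ = W
            have h1 := hφmul x⁻¹ x
            rw [inv_mul_cancel, hφone] at h1
            rw [hx] at h1
            exact h1.symm } with hSt
      have hHSt : H ≤ St := fun h hh => hφH h hh
      have hdvd : St.index ∣ ℓ ^ m := hidx ▸ Subgroup.index_dvd_of_le hHSt
      obtain ⟨j, hjm, hj⟩ := (Nat.dvd_prime_pow hℓ).mp hdvd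
      rcases Nat.eq_zero_or_pos j with hj0 | hjpos
      · rw [hj0, pow_zero] at hj
        have hSttop : St = ⊤ := Subgroup.index_eq_one.mp hj
        have hstab : ∀ g : G, ∀ x ∈ W, ((ρ g : Matrix (Fin 2) (Fin 2) k)).mulVec x ∈ W := by
          intro g x hx
          have hgSt : g ∈ St := by rw [hSttop]; trivial
          have hg : φ g = W := hgSt
          have hmem : ((ρ g : Matrix (Fin 2) (Fin 2) k)).mulVec x ∈ φ g :=
            Submodule.mem_map.mpr ⟨x, hx, Matrix.mulVecLin_apply _ _⟩
          rwa [hg] at hmem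
        rcases hirr W hstab with h | h
        exacts [hWb h, hWt h]
      · have hge : 2 < St.index := by
          have h3 : 3 ≤ ℓ ^ j := le_trans hℓ3 (Nat.le_self_pow hjpos.ne' ℓ)
          omega
        haveI : Finite (G ⧸ St) := Quotient.finite _
        rw [Subgroup.index_eq_card] at hge
        obtain ⟨x, y, z, hxy, hxz, hyz⟩ := three_distinct hge
        obtain ⟨g1, rfl⟩ := QuotientGroup.mk_surjective x
        obtain ⟨g2, rfl⟩ := QuotientGroup.mk_surjective y
        obtain ⟨g3, rfl⟩ := QuotientGroup.mk_surjective z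
        have hfneq : ∀ g g' : G,
            (QuotientGroup.mk g : G ⧸ St) ≠ QuotientGroup.mk g' → φ g ≠ φ g' := by
          intro g g' hne heq
          apply hne
          rw [QuotientGroup.eq]
          show φ (g⁻¹ * g') = W
          rw [hφmul, ← heq]
          exact hφinv g
        have hφbot : ∀ g : G, φ g ≠ ⊥ := by
          intro g h
          apply hWb
          have h1 := congrArg (Submodule.map ((ρ g⁻¹ : Matrix (Fin 2) (Fin 2) k)).mulVecLin) h
          rw [hφinv g, Submodule.map_bot] at h1
          exact h1
        have hφtop : ∀ g : G, φ g ≠ ⊤ := by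
          intro g h
          apply hWt
          have h1 := hφinv g
          rw [h, Submodule.map_top] at h1
          have hsur : Function.Surjective ((ρ g⁻¹ : Matrix (Fin 2) (Fin 2) k)).mulVecLin := by
            intro y
            refine ⟨((ρ g : Matrix (Fin 2) (Fin 2) k)).mulVec y, ?_⟩
            simp only [Matrix.mulVecLin_apply]
            rw [Matrix.mulVec_mulVec]
            rw [show ((ρ g⁻¹ : Matrix (Fin 2) (Fin 2) k)) *
                (ρ g : Matrix (Fin 2) (Fin 2) k) = 1 from by
              have hmm : ρ g⁻¹ * ρ g = 1 := by rw [← map_mul, inv_mul_cancel, map_one]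
              calc ((ρ g⁻¹ : Matrix (Fin 2) (Fin 2) k)) * (ρ g : Matrix (Fin 2) (Fin 2) k)
                  = ((ρ g⁻¹ * ρ g : Matrix.GeneralLinearGroup (Fin 2) k) :
                      Matrix (Fin 2) (Fin 2) k) := rfl
              _ = 1 := by rw [hmm]; rfl]
            rw [Matrix.one_mulVec]
          rw [LinearMap.range_eq_top.mpr hsur] at h1
          exact h1.symm
        have hφHst : ∀ g : G,
            Submodule.map ((ρ h₀ : Matrix (Fin 2) (Fin 2) k)).mulVecLin (φ g) = φ g := by
          intro g
          have e1 := hφmul h₀ g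
          have e2 : h₀ * g = g * (g⁻¹ * h₀ * g) := by group
          have e3 : φ (h₀ * g) =
              Submodule.map ((ρ g : Matrix (Fin 2) (Fin 2) k)).mulVecLin (φ (g⁻¹ * h₀ * g)) := by
            rw [e2]; exact hφmul g _
          have hmemH : (g⁻¹ * h₀ * g) ∈ H := by
            have hcm := hH.conj_mem h₀ hh₀H g⁻¹
            simpa using hcm
          rw [hφH _ hmemH] at e3
          exact e1.symm.trans e3
        obtain ⟨v1, hv1, hsp1⟩ := line_exists (hφbot g1) (hφtop g1)
        obtain ⟨v2, hv2, hsp2⟩ := line_exists (hφbot g2) (hφtop g2)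
        obtain ⟨v3, hv3, hsp3⟩ := line_exists (hφbot g3) (hφtop g3)
        have heig : ∀ (g : G) (v : Fin 2 → k), v ≠ 0 → φ g = Submodule.span k {v} →
            ∃ c : k, ((ρ h₀ : Matrix (Fin 2) (Fin 2) k)).mulVec v = c • v := by
          intro g v hv hspan
          have hvmem : v ∈ φ g := by
            rw [hspan]; exact Submodule.mem_span_singleton_self v
          have hmem : ((ρ h₀ : Matrix (Fin 2) (Fin 2) k)).mulVec v ∈ φ g := by
            rw [← hφHst g]
            exact Submodule.mem_map.mpr ⟨v, hvmem, Matrix.mulVecLin_apply _ _⟩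
          rw [hspan, Submodule.mem_span_singleton] at hmem
          obtain ⟨c, hc⟩ := hmem
          exact ⟨c, hc.symm⟩
        obtain ⟨c1, he1⟩ := heig g1 v1 hv1 hsp1
        obtain ⟨c2, he2⟩ := heig g2 v2 hv2 hsp2
        obtain ⟨c3, he3⟩ := heig g3 v3 hv3 hsp3
        have hnp : ∀ (va vb : Fin 2 → k), va ≠ 0 →
            ∀ (ga gb : G), φ ga = Submodule.span k {va} → φ gb = Submodule.span k {vb} →
            φ ga ≠ φ gb → ∀ e : k, va ≠ e • vb := by
          intro va vb hva ga gb hSa hSb hne e hee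
          apply hne
          have he0 : e ≠ 0 := by
            rintro rfl; rw [zero_smul] at hee; exact hva hee
          rw [hSa, hSb, hee]
          exact Submodule.span_singleton_smul_eq (IsUnit.mk0 e he0) vb
        have n12 : ∀ e : k, v1 ≠ e • v2 :=
          hnp v1 v2 hv1 g1 g2 hsp1 hsp2 (hfneq g1 g2 hxy)
        have n31 : ∀ e : k, v3 ≠ e • v1 :=
          hnp v3 v1 hv3 g3 g1 hsp3 hsp1 (hfneq g3 g1 hxz.symm)
        have n32 : ∀ e : k, v3 ≠ e • v2 :=
          hnp v3 v2 hv3 g3 g2 hsp3 hsp2 (hfneq g3 g2 hyz.symm)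
        obtain ⟨e, he⟩ := eig3 hv2 he1 he2 he3 n12 n31 n32
        exact hh₀ e he
  · intro hres W hW
    exact hres W (fun g _ => hW g)
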